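/- Assume K has characteristic 0 and let r ≥ 1 be an integer. With the hyperplane-section setup (points P_1, …, P_n in the hyperplane H: x_0 = 0 of P^{N+1}, with I their radical ideal in K[x_1, …, x_{N+1}] and Î their radical ideal in K[x_0, …, x_{N+1}]): if I^{(rN)} ⊆ M^{r(N−1)} I^r, then Î^{(r(N+1))} ⊆ M̂^{rN} Î^r. -/

import Mathlib

open MvPolynomial

noncomputable section

/-- The ideal generated by all homogeneous forms vanishing at the point with
coordinate vector `p`. -/
def homVanishingIdeal {K σ : Type*} [Field K] (p : σ → K) : Ideal (MvPolynomial σ K) :=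
  Ideal.span {F : MvPolynomial σ K | (∃ d, F.IsHomogeneous d) ∧ MvPolynomial.eval p F = 0}

/-- The `m`-th symbolic power of the radical ideal of the finite set of points
with coordinate vectors `P i`: the intersection of the `m`-th powers of the
ideals of the individual points. -/
def symbPow {K σ ι : Type*} [Field K] (P : ι → σ → K) (m : ℕ) : Ideal (MvPolynomial σ K) :=
  ⨅ i, homVanishingIdeal (P i) ^ m

/-- The irrelevant maximal ideal `M = (x_0, …, x_N)`. -/
def irrel (K σ : Type*) [Field K] : Ideal (MvPolynomial σ K) :=
  Ideal.span (Set.range (MvPolynomial.X : σ → MvPolynomial σ K))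

/-- The coordinate vectors `P i` are nonzero and represent pairwise distinct
points of projective space (no two are proportional). -/
def ProjectivelyDistinct {K σ ι : Type*} [Field K] (P : ι → σ → K) : Prop :=
  (∀ i, P i ≠ 0) ∧ Pairwise fun i j => ∀ c : K, P i ≠ c • P j

/-- `α(J)`: the least degree of a nonzero homogeneous element of `J`. -/
def idealAlpha {K σ : Type*} [Field K] (J : Ideal (MvPolynomial σ K)) : ℕ :=
  sInf {d : ℕ | ∃ F ∈ J, F ≠ 0 ∧ MvPolynomial.IsHomogeneous F d}
namespace Stmt13Aux

variable {K : Type*} [Field K]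

lemma mem_irrel_iff {σ : Type*} (f : MvPolynomial σ K) :
    f ∈ irrel K σ ↔ constantCoeff f = 0 := by
  rw [irrel, ← Set.image_univ, MvPolynomial.mem_ideal_span_X_image, constantCoeff_eq]
  constructor
  · intro hh
    by_contra hc
    obtain ⟨i, -, hi⟩ := hh 0 (mem_support_iff.mpr hc)
    simp at hi
  · intro h0 m hm
    have hmne : m ≠ 0 := by
      rintro rfl; exact (mem_support_iff.mp hm) h0
    obtain ⟨i, hi⟩ := Finsupp.ne_iff.mp hmne
    exact ⟨i, Set.mem_univ i, by simpa using hi⟩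

lemma X_mem_irrel {σ : Type*} (i : σ) : (X i : MvPolynomial σ K) ∈ irrel K σ :=
  Ideal.subset_span ⟨i, rfl⟩

lemma homVanishingIdeal_le_irrel {σ : Type*} (p : σ → K) :
    homVanishingIdeal p ≤ irrel K σ := by
  classical
  rw [homVanishingIdeal, Ideal.span_le]
  rintro F ⟨⟨d, hd⟩, hev⟩
  rw [SetLike.mem_coe, mem_irrel_iff]
  rcases eq_or_ne d 0 with rfl | hd0
  · have hF : F = C (constantCoeff F) := by
      ext u
      rcases eq_or_ne u 0 with rfl | hu
      · simp [constantCoeff_eq]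
      · rw [hd.coeff_eq_zero (by rw [Ne, Finsupp.degree_eq_zero_iff]; exact hu)]
        rw [coeff_C, if_neg (Ne.symm hu)]
    rw [hF] at hev
    simpa using hev
  · rw [constantCoeff_eq]
    exact hd.coeff_eq_zero (by simpa [map_zero] using (Ne.symm hd0))

lemma X0_mem_homVan {m : ℕ} (p : Fin (m + 1) → K) (hp : p 0 = 0) :
    (X 0 : MvPolynomial (Fin (m + 1)) K) ∈ homVanishingIdeal p :=
  Ideal.subset_span ⟨⟨1, isHomogeneous_X _ _⟩, by simp [hp]⟩

lemma symbPow_le_irrel_pow {σ ι : Type*} [Nonempty ι] (P : ι → σ → K) (m : ℕ) :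
    symbPow P m ≤ irrel K σ ^ m :=
  (iInf_le _ (Classical.arbitrary ι)).trans
    (Ideal.pow_right_mono (homVanishingIdeal_le_irrel _) m)

lemma pderiv_mem_pow {σ : Type*} (J : Ideal (MvPolynomial σ K)) (i : σ) (m : ℕ) :
    ∀ f ∈ J ^ (m + 1), pderiv i f ∈ J ^ m := by
  induction m with
  | zero => intro f _; simp [Ideal.one_eq_top]
  | succ m ih =>
    intro f hf
    rw [pow_succ] at hf
    refine Submodule.mul_induction_on hf ?_ ?_
    · intro a ha b hb
      rw [pderiv_mul]
      refine Ideal.add_mem _ ?_ ?_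
      · rw [pow_succ]; exact Ideal.mul_mem_mul (ih a ha) hb
      · exact Ideal.mul_mem_right _ _ ha
    · intro x y hx hy
      rw [map_add]; exact Ideal.add_mem _ hx hy

lemma euler {σ : Type*} [Fintype σ] [DecidableEq σ] {f : MvPolynomial σ K} {d : ℕ}
    (hf : f.IsHomogeneous d) :
    ∑ i : σ, X i * pderiv i f = C (d : K) * f := by
  conv_lhs => rw [← support_sum_monomial_coeff f]
  conv_rhs => rw [← support_sum_monomial_coeff f]
  rw [Finset.mul_sum]
  simp only [map_sum, Finset.mul_sum]
  rw [Finset.sum_comm]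
  refine Finset.sum_congr rfl fun u hu => ?_
  have hdeg : ∑ i : σ, u i = d := by
    have h1 := hf (mem_support_iff.mp hu)
    have h2 : u.degree = d := by rw [Finsupp.degree_eq_weight_one]; exact h1
    rw [← h2, Finsupp.degree]
    exact (Finset.sum_subset (Finset.subset_univ u.support)
      (fun i _ hi => Finsupp.notMem_support_iff.mp hi)).symm
  have key : ∀ i : σ, X i * pderiv i (monomial u (coeff u f))
      = monomial u (coeff u f * (u i : K)) := by
    intro i
    rw [pderiv_monomial]
    rcases eq_or_ne (u i) 0 with h0 | h0
    · rw [h0]; simp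
    · have huu : Finsupp.single i 1 + (u - Finsupp.single i 1) = u := by
        ext j
        rcases eq_or_ne j i with rfl | hij
        · simp only [Finsupp.add_apply, Finsupp.tsub_apply, Finsupp.single_eq_same]
          omega
        · simp [Finsupp.single_eq_of_ne hij]
      rw [X, monomial_mul, one_mul, huu]
  simp only [key]
  rw [← map_sum, ← Finset.mul_sum, ← Nat.cast_sum, hdeg, C_mul_monomial, mul_comm]


attribute [local instance] MvPolynomial.gradedAlgebra

lemma homVan_isHomogeneous {σ : Type*} (p : σ → K) :
    (homVanishingIdeal p).IsHomogeneous (homogeneousSubmodule σ K) :=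
  Ideal.homogeneous_span _ _ fun F hF => by
    obtain ⟨⟨d, hd⟩, -⟩ := hF
    exact ⟨d, (mem_homogeneousSubmodule _ _).mpr hd⟩

lemma isHomogeneous_pow {σ : Type*} {J : Ideal (MvPolynomial σ K)}
    (hJ : J.IsHomogeneous (homogeneousSubmodule σ K)) (m : ℕ) :
    (J ^ m).IsHomogeneous (homogeneousSubmodule σ K) := by
  induction m with
  | zero => rw [pow_zero, Ideal.one_eq_top]; exact Ideal.IsHomogeneous.top _
  | succ m ih => rw [pow_succ]; exact ih.mul hJ

lemma symbPow_isHomogeneous {σ ι : Type*} (P : ι → σ → K) (m : ℕ) :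
    (symbPow P m).IsHomogeneous (homogeneousSubmodule σ K) :=
  Ideal.IsHomogeneous.iInf fun i => isHomogeneous_pow (homVan_isHomogeneous (P i)) m

lemma symbPow_succ_le [CharZero K] {σ ι : Type*} [Fintype σ] [DecidableEq σ] [Nonempty ι]
    (Q : ι → σ → K) (a : ℕ) :
    symbPow Q (a + 1) ≤ irrel K σ * symbPow Q a := by
  classical
  intro f hf
  have hhom := symbPow_isHomogeneous Q (a + 1)
  rw [← DirectSum.sum_support_decompose (homogeneousSubmodule σ K) f]
  refine Ideal.sum_mem _ fun d _ => ?_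
  set g : MvPolynomial σ K :=
    (DirectSum.decompose (homogeneousSubmodule σ K) f d : MvPolynomial σ K) with hgdef
  have hgmem : g ∈ symbPow Q (a + 1) := hhom d hf
  have hgh : g.IsHomogeneous d := (mem_homogeneousSubmodule _ _).mp (SetLike.coe_mem _)
  rcases eq_or_ne d 0 with rfl | hd0
  · have hcc : constantCoeff g = 0 := by
      rw [← mem_irrel_iff]
      refine (symbPow_le_irrel_pow Q (a + 1)).trans ?_ hgmem
      calc irrel K σ ^ (a + 1) ≤ irrel K σ ^ 1 := Ideal.pow_le_pow_right (by omega)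
      _ = irrel K σ := pow_one _
    have hg0 : g = 0 := by
      ext u
      rcases eq_or_ne u 0 with rfl | hu
      · simpa [constantCoeff_eq] using hcc
      · rw [hgh.coeff_eq_zero (by rw [Ne, Finsupp.degree_eq_zero_iff]; exact hu), coeff_zero]
    rw [hg0]
    exact Ideal.zero_mem _
  · have heuler := euler (K := K) hgh
    have hmem : ∑ i : σ, X i * pderiv i g ∈ irrel K σ * symbPow Q a := by
      refine Ideal.sum_mem _ fun i _ => Ideal.mul_mem_mul (X_mem_irrel i) ?_
      rw [symbPow, Ideal.mem_iInf]
      intro j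
      refine pderiv_mem_pow _ _ _ g ?_
      have := hgmem
      rw [symbPow, Ideal.mem_iInf] at this
      exact this j
    rw [heuler] at hmem
    have hgeq : g = C ((d : K)⁻¹) * (C (d : K) * g) := by
      rw [← mul_assoc, ← C_mul, inv_mul_cancel₀ (Nat.cast_ne_zero.mpr hd0), C_1, one_mul]
    rw [hgeq]
    exact Ideal.mul_mem_left _ _ hmem

lemma symbPow_add_le [CharZero K] {σ ι : Type*} [Fintype σ] [DecidableEq σ] [Nonempty ι]
    (Q : ι → σ → K) (a s : ℕ) :
    symbPow Q (a + s) ≤ irrel K σ ^ s * symbPow Q a := by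
  induction s with
  | zero => simp [Ideal.one_eq_top]
  | succ s ih =>
    have h1 : symbPow Q (a + s + 1) ≤ irrel K σ * symbPow Q (a + s) := symbPow_succ_le Q (a + s)
    have h2 : symbPow Q (a + (s + 1)) ≤ irrel K σ * (irrel K σ ^ s * symbPow Q a) :=
      (show symbPow Q (a + (s + 1)) = symbPow Q (a + s + 1) by rw [add_assoc]) ▸
        h1.trans (Ideal.mul_mono_right ih)
    rwa [← mul_assoc, ← pow_succ'] at h2


/-- The ideal of polynomials whose `k`-th coefficient lies in `J ^ (m - k)`. -/
def coeffIdeal {A : Type*} [CommRing A] (J : Ideal A) (m : ℕ) : Ideal (Polynomial A) where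
  carrier := {p | ∀ k, p.coeff k ∈ J ^ (m - k)}
  zero_mem' := fun k => by simp
  add_mem' := fun {p q} hp hq k => by
    rw [Polynomial.coeff_add]; exact Ideal.add_mem _ (hp k) (hq k)
  smul_mem' := fun c p hp k => by
    rw [smul_eq_mul, Polynomial.coeff_mul]
    refine Ideal.sum_mem _ fun x hx => ?_
    have hxk := Finset.HasAntidiagonal.mem_antidiagonal.mp hx
    exact Ideal.mul_mem_left _ _
      (Ideal.pow_le_pow_right (by omega) (hp x.2))

lemma coeffIdeal_mul_le {A : Type*} [CommRing A] (J : Ideal A) (a b : ℕ) :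
    coeffIdeal J a * coeffIdeal J b ≤ coeffIdeal J (a + b) := by
  rw [Ideal.mul_le]
  intro p hp q hq k
  rw [Polynomial.coeff_mul]
  refine Ideal.sum_mem _ fun x hx => ?_
  have hxk := Finset.HasAntidiagonal.mem_antidiagonal.mp hx
  have h1 : p.coeff x.1 * q.coeff x.2 ∈ J ^ ((a - x.1) + (b - x.2)) := by
    rw [pow_add]; exact Ideal.mul_mem_mul (hp x.1) (hq x.2)
  exact Ideal.pow_le_pow_right (by omega) h1

lemma span_X_sup_map_C_le {A : Type*} [CommRing A] (J : Ideal A) :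
    Ideal.span {Polynomial.X} ⊔ Ideal.map Polynomial.C J ≤ coeffIdeal J 1 := by
  refine sup_le ?_ ?_
  · rw [Ideal.span_le]
    rintro p rfl
    intro k
    rcases eq_or_ne k 1 with rfl | hk
    · simp
    · rw [Polynomial.coeff_X, if_neg (fun hh => hk hh.symm)]
      exact Ideal.zero_mem _
  · rw [Ideal.map_le_iff_le_comap]
    intro aa ha
    intro k
    rcases eq_or_ne k 0 with rfl | hk
    · simpa [Polynomial.coeff_C] using ha
    · rw [Polynomial.coeff_C, if_neg hk]
      exact Ideal.zero_mem _

lemma span_X_sup_map_C_pow_le {A : Type*} [CommRing A] (J : Ideal A) (m : ℕ) :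
    (Ideal.span {Polynomial.X} ⊔ Ideal.map Polynomial.C J) ^ m ≤ coeffIdeal J m := by
  induction m with
  | zero =>
    rw [pow_zero, Ideal.one_eq_top]
    intro p _ k
    simp
  | succ m ih =>
    rw [pow_succ]
    exact (Ideal.mul_mono ih (span_X_sup_map_C_le J)).trans (coeffIdeal_mul_le J m 1)

lemma map_finSuccEquiv_homVan_le {m : ℕ} (p : Fin (m + 1) → K) (hp : p 0 = 0) :
    Ideal.map (finSuccEquiv K m) (homVanishingIdeal p) ≤
      Ideal.span {Polynomial.X} ⊔
        Ideal.map Polynomial.C (homVanishingIdeal fun j : Fin m => p j.succ) := by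
  rw [homVanishingIdeal, Ideal.map_span, Ideal.span_le]
  rintro _ ⟨G, ⟨⟨d, hd⟩, hev⟩, rfl⟩
  rw [SetLike.mem_coe]
  have hdecomp : finSuccEquiv K m G =
      Polynomial.X * (finSuccEquiv K m G).divX + Polynomial.C ((finSuccEquiv K m G).coeff 0) :=
    (Polynomial.X_mul_divX_add _).symm
  rw [hdecomp]
  refine Ideal.add_mem _ ?_ ?_
  · exact Ideal.mem_sup_left (Ideal.mul_mem_right _ _ (Ideal.subset_span rfl))
  · refine Ideal.mem_sup_right (Ideal.mem_map_of_mem _ ?_)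
    refine Ideal.subset_span ⟨⟨d, hd.finSuccEquiv_coeff_isHomogeneous 0 d (zero_add d)⟩, ?_⟩
    have hcons : (Fin.cons (0 : K) (fun j : Fin m => p j.succ)) = p := by
      funext j
      refine Fin.cases ?_ ?_ j
      · simpa using hp.symm
      · intro j; simp
    have h2 := eval_eq_eval_mv_eval' (fun j : Fin m => p j.succ) 0 G
    rw [hcons, hev] at h2
    rw [← Polynomial.coeff_zero_eq_eval_zero, Polynomial.coeff_map] at h2
    exact h2.symm

lemma finSuccEquiv_rename_succ {m : ℕ} (g : MvPolynomial (Fin m) K) :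
    finSuccEquiv K m (rename Fin.succ g) = Polynomial.C g := by
  induction g using MvPolynomial.induction_on with
  | C a => rw [rename_C, finSuccEquiv_apply]; simp
  | add p q hp hq => rw [map_add, map_add, hp, hq, map_add]
  | mul_X p j hp => rw [map_mul, map_mul, hp, rename_X, finSuccEquiv_X_succ, ← Polynomial.C_mul]

lemma map_rename_succ_homVan_le {m : ℕ} (p : Fin (m + 1) → K) :
    Ideal.map (rename (Fin.succ) : MvPolynomial (Fin m) K →ₐ[K] MvPolynomial (Fin (m + 1)) K)
        (homVanishingIdeal fun j : Fin m => p j.succ) ≤ homVanishingIdeal p := by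
  rw [homVanishingIdeal, Ideal.map_span, Ideal.span_le]
  rintro _ ⟨G, ⟨⟨d, hd⟩, hev⟩, rfl⟩
  refine Ideal.subset_span ⟨⟨d, hd.rename_isHomogeneous⟩, ?_⟩
  rw [eval_rename]
  exact hev

lemma map_rename_succ_irrel_le {m : ℕ} :
    Ideal.map (rename (Fin.succ) : MvPolynomial (Fin m) K →ₐ[K] MvPolynomial (Fin (m + 1)) K)
        (irrel K (Fin m)) ≤ irrel K (Fin (m + 1)) := by
  rw [irrel, Ideal.map_span, Ideal.span_le]
  rintro _ ⟨_, ⟨j, rfl⟩, rfl⟩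
  rw [SetLike.mem_coe, rename_X]
  exact X_mem_irrel _

lemma map_rename_succ_symbPow_le {m n' : ℕ} (P : Fin n' → Fin (m + 1) → K) (t : ℕ) :
    Ideal.map (rename (Fin.succ) : MvPolynomial (Fin m) K →ₐ[K] MvPolynomial (Fin (m + 1)) K)
        (symbPow (fun i (j : Fin m) => P i j.succ) t) ≤ symbPow P t := by
  rw [symbPow, symbPow]
  refine le_iInf fun i => ?_
  refine (Ideal.map_mono (iInf_le _ i)).trans ?_
  rw [Ideal.map_pow]
  exact Ideal.pow_right_mono (map_rename_succ_homVan_le (P i)) t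

end Stmt13Aux

open Stmt13Aux

/-- Hyperplane section, char 0.  Points `P i` of `P^{N+1}` lie in the
hyperplane `x_0 = 0`; `fun i (j : Fin (N+1)) => P i j.succ` gives their coordinate
vectors as points of `P^N = H`.  If `I^{(rN)} ⊆ M^{r(N-1)} I^r` in `K[x_1,…,x_{N+1}]`,
then `Î^{(r(N+1))} ⊆ M̂^{rN} Î^r` in `K[x_0,…,x_{N+1}]`. -/
theorem stmt13 {K : Type*} [Field K] [IsAlgClosed K] [CharZero K]
    {N n : ℕ} (hN : 1 ≤ N) (hn : 1 ≤ n)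
    (P : Fin n → (Fin (N + 2) → K)) (hP : ProjectivelyDistinct P)
    (hinH : ∀ i, P i 0 = 0)
    (r : ℕ) (hr : 1 ≤ r)
    (h : symbPow (fun i (j : Fin (N + 1)) => P i j.succ) (r * N) ≤
      irrel K (Fin (N + 1)) ^ (r * (N - 1)) *
        symbPow (fun i (j : Fin (N + 1)) => P i j.succ) 1 ^ r) :
    symbPow P (r * (N + 1)) ≤ irrel K (Fin (N + 2)) ^ (r * N) * symbPow P 1 ^ r := by
  obtain ⟨N', rfl⟩ : ∃ N', N = N' + 1 := ⟨N - 1, by omega⟩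
  have hnone : Nonempty (Fin n) := ⟨⟨0, hn⟩⟩
  simp only [Nat.add_sub_cancel] at h
  set Q : Fin n → Fin (N' + 1 + 1) → K := fun i (j : Fin (N' + 1 + 1)) => P i j.succ with hQ
  set t := r * (N' + 1) with htdef
  set b := r * N' with hbdef
  have ht : t = b + r := by rw [htdef, hbdef, Nat.mul_succ]
  have hm : r * (N' + 1 + 1) = t + r := by rw [htdef, Nat.mul_succ]
  intro F hF
  -- coefficient extraction
  have hcoeff : ∀ k, ((finSuccEquiv K (N' + 2)) F).coeff k ∈ symbPow Q (r * (N' + 1 + 1) - k) := by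
    intro k
    rw [symbPow, Ideal.mem_iInf]
    intro i
    have h1 : F ∈ homVanishingIdeal (P i) ^ (r * (N' + 1 + 1)) := by
      rw [symbPow, Ideal.mem_iInf] at hF
      exact hF i
    have h2 : (finSuccEquiv K (N' + 2)) F ∈ (Ideal.map (finSuccEquiv K (N' + 2)) (homVanishingIdeal (P i))) ^ (r * (N' + 1 + 1)) := by
      rw [← Ideal.map_pow]
      exact Ideal.mem_map_of_mem _ h1
    have h3 := (Ideal.pow_right_mono (map_finSuccEquiv_homVan_le (P i) (hinH i)) _) h2
    exact span_X_sup_map_C_pow_le _ _ h3 k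
  -- reassembly
  have hsum : F = ∑ k ∈ ((finSuccEquiv K (N' + 2)) F).support,
      rename Fin.succ (((finSuccEquiv K (N' + 2)) F).coeff k) * X 0 ^ k := by
    apply (finSuccEquiv K (N' + 2)).injective
    rw [map_sum]
    simp only [map_mul, map_pow, finSuccEquiv_rename_succ, finSuccEquiv_X_zero]
    conv_lhs => rw [← Polynomial.sum_C_mul_X_pow_eq ((finSuccEquiv K (N' + 2)) F)]
    rw [Polynomial.sum_def]
  rw [hsum]
  refine Ideal.sum_mem _ fun k _ => ?_
  by_cases hk : k < r
  · -- small k : use the hypothesis and the Euler descent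
    have hrw : r * (N' + 1 + 1) - k = t + (r - k) := by omega
    have hFk : ((finSuccEquiv K (N' + 2)) F).coeff k ∈ symbPow Q (t + (r - k)) := hrw ▸ hcoeff k
    have h5 := symbPow_add_le Q t (r - k) hFk
    have h6 : ((finSuccEquiv K (N' + 2)) F).coeff k ∈
        irrel K (Fin (N' + 1 + 1)) ^ (r - k) * (irrel K (Fin (N' + 1 + 1)) ^ b * symbPow Q 1 ^ r) :=
      (Ideal.mul_mono_right h) h5
    rw [← mul_assoc, ← pow_add] at h6
    have h7 : rename Fin.succ (((finSuccEquiv K (N' + 2)) F).coeff k) ∈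
        irrel K (Fin (N' + 1 + 2)) ^ (r - k + b) * symbPow P 1 ^ r := by
      have h8 := Ideal.mem_map_of_mem
        (rename (Fin.succ) :
          MvPolynomial (Fin (N' + 1 + 1)) K →ₐ[K] MvPolynomial (Fin (N' + 1 + 2)) K) h6
      rw [Ideal.map_mul, Ideal.map_pow, Ideal.map_pow] at h8
      exact (Ideal.mul_mono (Ideal.pow_right_mono map_rename_succ_irrel_le _)
        (Ideal.pow_right_mono (map_rename_succ_symbPow_le P 1) _)) h8
    have h9 := Ideal.mul_mem_mul h7 (Ideal.pow_mem_pow (X_mem_irrel (K := K) (0 : Fin (N' + 1 + 2))) k)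
    rw [mul_right_comm, ← pow_add] at h9
    have hexp : r - k + b + k = t := by omega
    rwa [hexp] at h9
  · -- large k
    push_neg at hk
    have hFk : ((finSuccEquiv K (N' + 2)) F).coeff k ∈ irrel K (Fin (N' + 1 + 1)) ^ (r * (N' + 1 + 1) - k) :=
      symbPow_le_irrel_pow Q _ (hcoeff k)
    have h8 : rename Fin.succ (((finSuccEquiv K (N' + 2)) F).coeff k) ∈
        irrel K (Fin (N' + 1 + 2)) ^ (r * (N' + 1 + 1) - k) := by
      have := Ideal.mem_map_of_mem
        (rename (Fin.succ) :
          MvPolynomial (Fin (N' + 1 + 1)) K →ₐ[K] MvPolynomial (Fin (N' + 1 + 2)) K) hFk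
      rw [Ideal.map_pow] at this
      exact Ideal.pow_right_mono map_rename_succ_irrel_le _ this
    have hX0S : (X 0 : MvPolynomial (Fin (N' + 1 + 2)) K) ∈ symbPow P 1 := by
      rw [symbPow, Ideal.mem_iInf]
      intro i
      rw [pow_one]
      exact X0_mem_homVan (P i) (hinH i)
    have heq : rename Fin.succ (((finSuccEquiv K (N' + 2)) F).coeff k) * X 0 ^ k
        = (rename Fin.succ (((finSuccEquiv K (N' + 2)) F).coeff k) * X 0 ^ (k - r)) * X 0 ^ r := by
      rw [mul_assoc, ← pow_add, Nat.sub_add_cancel hk]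
    rw [heq]
    have h9 : rename Fin.succ (((finSuccEquiv K (N' + 2)) F).coeff k) * X 0 ^ (k - r) ∈
        irrel K (Fin (N' + 1 + 2)) ^ ((r * (N' + 1 + 1) - k) + (k - r)) := by
      rw [pow_add]
      exact Ideal.mul_mem_mul h8 (Ideal.pow_mem_pow (X_mem_irrel _) _)
    rw [hm] at h9
    have h10 : rename Fin.succ (((finSuccEquiv K (N' + 2)) F).coeff k) * X 0 ^ (k - r) ∈
        irrel K (Fin (N' + 1 + 2)) ^ t :=
      Ideal.pow_le_pow_right (by omega) h9
    exact Ideal.mul_mem_mul h10 (Ideal.pow_mem_pow hX0S r)
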